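/- Let n ≥ 1 and let v₁, …, vₙ ∈ ℂ⁴ be vectors whose second coordinate is 0. Then vⱼᵗ I_{1,3} v_l = 0 for all 1 ≤ j, l ≤ n if and only if there exist a vector w ∈ ℂ⁴ and scalars h₁, …, hₙ ∈ ℂ with vⱼ = hⱼ·w for all j, where w is either of the form (2ih₀, 0, 1 − h₀², i(1 + h₀²)) for some h₀ ∈ ℂ or equals (0, 0, 1, −i). -/

import Mathlib

open Matrix

noncomputable section

/-- `I_{1,3} = diag(−1,1,1,1)`. -/
def I13 : Matrix (Fin 4) (Fin 4) ℂ :=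
  !![-1, 0, 0, 0;
     0, 1, 0, 0;
     0, 0, 1, 0;
     0, 0, 0, 1]

/-- The bilinear form `(v, w) ↦ vᵗ I_{1,3} w` on `ℂ⁴`. -/
def bform (v w : Fin 4 → ℂ) : ℂ := v ⬝ᵥ I13.mulVec w

lemma bform_eq (v w : Fin 4 → ℂ) :
    bform v w = -(v 0 * w 0) + v 1 * w 1 + v 2 * w 2 + v 3 * w 3 := by
  simp [bform, I13, mulVec, dotProduct, Fin.sum_univ_four, Matrix.vecHead, Matrix.vecTail]

lemma sq0 {x : ℂ} (h : x ^ 2 = 0) : x = 0 :=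
  pow_eq_zero_iff (n := 2) (by norm_num) |>.mp h

lemma prop_lemma (a b c a' b' c' : ℂ) (h1 : a^2 = b^2 + c^2) (h2 : a'^2 = b'^2 + c'^2)
    (h3 : a * a' = b * b' + c * c') (hne : ¬(a = 0 ∧ b = 0 ∧ c = 0)) :
    ∃ t : ℂ, a' = t * a ∧ b' = t * b ∧ c' = t * c := by
  have hbc : b * c' = b' * c := by
    have hk : (b * c' - b' * c)^2 = 0 := by
      linear_combination (-(a'^2)) * h1 - (b^2+c^2) * h2 + (a*a'+b*b'+c*c') * h3
    linear_combination sq0 hk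
  by_cases hb : b = 0
  · by_cases hc : c = 0
    · exact absurd ⟨sq0 (by rw [h1, hb, hc]; ring), hb, hc⟩ hne
    · -- b = 0, c ≠ 0
      have hb' : b' = 0 := by
        rcases mul_eq_zero.mp (show b' * c = 0 by rw [← hbc, hb]; ring) with h | h
        · exact h
        · exact absurd h hc
      have haz : a ≠ 0 := by
        intro ha
        exact hc (sq0 (by linear_combination -h1 + a * ha - b * hb))
      refine ⟨c' / c, ?_, ?_, by field_simp⟩
      · have key : a' * c * a = c' * a * a := by
          linear_combination c * h3 - c' * h1 + (b' * c - c' * b) * hb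
        have hac : a' * c = c' * a := mul_right_cancel₀ haz key
        field_simp
        linear_combination hac
      · rw [hb', hb]; ring
  · -- b ≠ 0
    refine ⟨b' / b, ?_, by field_simp, ?_⟩
    · by_cases ha : a = 0
      · have h9 : a' ^ 2 * b ^ 2 = 0 := by
          linear_combination b^2 * h2 + (c' * b + b' * c) * hbc - b'^2 * h1 + b'^2 * a * ha
        have : a' ^ 2 = 0 := by
          rcases mul_eq_zero.mp h9 with h | h
          · exact h
          · exact absurd (sq0 h) hb
        rw [sq0 this, ha]; ring
      · have key : a' * b * a = b' * a * a := by
          linear_combination b * h3 + c * hbc - b' * h1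
        have hab : a' * b = b' * a := mul_right_cancel₀ ha key
        field_simp
        linear_combination hab
    · field_simp
      linear_combination hbc

lemma param (a b c : ℂ) (h1 : a^2 = b^2 + c^2) :
    ∃ (h : ℂ) (w : Fin 4 → ℂ),
      (a = h * w 0 ∧ b = h * w 2 ∧ c = h * w 3) ∧
      ((∃ h0 : ℂ, w = ![2 * Complex.I * h0, 0, 1 - h0 ^ 2, Complex.I * (1 + h0 ^ 2)]) ∨
        w = ![0, 0, 1, -Complex.I]) := by
  have hI : Complex.I ^ 2 = -1 := Complex.I_sq
  by_cases hq : b - Complex.I * c = 0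
  · -- degenerate case: w = (0,0,1,-i)
    have ha : a = 0 := sq0 (by linear_combination h1 + (b + Complex.I * c) * hq + c^2 * hI)
    refine ⟨b, ![0, 0, 1, -Complex.I], ⟨?_, ?_, ?_⟩, Or.inr rfl⟩
    · simpa using ha
    · simp
    · simp only [Matrix.cons_val_three, Matrix.cons_val_two, Matrix.tail_cons, Matrix.head_cons]
      linear_combination Complex.I * hq + c * hI
  · -- generic case
    set q := b - Complex.I * c with hqdef
    have hIq : Complex.I * q ≠ 0 := mul_ne_zero Complex.I_ne_zero hq
    have h0sq : (a / (Complex.I * q)) ^ 2 = -(a ^ 2) / q ^ 2 := by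
      have e : (Complex.I * q) ^ 2 = -(q ^ 2) := by rw [mul_pow, hI]; ring
      rw [div_pow, e, div_neg, neg_div]
    refine ⟨q / 2, ![2 * Complex.I * (a / (Complex.I * q)), 0,
        1 - (a / (Complex.I * q)) ^ 2, Complex.I * (1 + (a / (Complex.I * q)) ^ 2)],
        ⟨?_, ?_, ?_⟩, Or.inl ⟨a / (Complex.I * q), rfl⟩⟩
    · simp only [Matrix.cons_val_zero]
      field_simp
    · simp only [Matrix.cons_val_two, Matrix.tail_cons, Matrix.head_cons]
      rw [h0sq]
      have hq2 : q ≠ 0 := hq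
      field_simp
      linear_combination -h1 - c^2 * hI
    · simp only [Matrix.cons_val_three, Matrix.cons_val_two, Matrix.tail_cons, Matrix.head_cons]
      rw [h0sq]
      have hq2 : q ≠ 0 := hq
      field_simp
      linear_combination (c + c*Complex.I^2 + Complex.I) * h1 + (c*b^2 - c*a^2 + c^3 + 2*c*b - c^2*Complex.I) * hI

/-- vectors `v₁, …, vₙ ∈ ℂ⁴` with vanishing second coordinate are pairwise
isotropic for `I_{1,3}` iff they are all multiples of a single vector of the form
`(2ih₀, 0, 1 − h₀², i(1 + h₀²))` or of `(0, 0, 1, −i)`. -/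
theorem stmt11 (n : ℕ) (hn : 1 ≤ n) (v : Fin n → (Fin 4 → ℂ)) (hv : ∀ j, v j 1 = 0) :
    (∀ j l, bform (v j) (v l) = 0) ↔
      ∃ (w : Fin 4 → ℂ) (h : Fin n → ℂ),
        (∀ j, v j = h j • w) ∧
        ((∃ h0 : ℂ, w = ![2 * Complex.I * h0, 0, 1 - h0 ^ 2, Complex.I * (1 + h0 ^ 2)]) ∨
          w = ![0, 0, 1, -Complex.I]) := by
  constructor
  · intro hbf
    by_cases hz : ∀ j, v j = 0
    · refine ⟨![0, 0, 1, -Complex.I], 0, fun j => by rw [hz j]; simp, Or.inr rfl⟩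
    · push_neg at hz
      obtain ⟨j0, hj0⟩ := hz
      have hiso : ∀ j l, v j 0 * v l 0 = v j 2 * v l 2 + v j 3 * v l 3 := by
        intro j l
        have := hbf j l
        rw [bform_eq, hv j] at this
        linear_combination -this
      have hself : ∀ j, (v j 0) ^ 2 = (v j 2) ^ 2 + (v j 3) ^ 2 := by
        intro j
        have := hiso j j
        linear_combination this
      obtain ⟨h, w, ⟨hw0, hw2, hw3⟩, hform⟩ := param _ _ _ (hself j0)
      have hw1 : w 1 = 0 := by
        rcases hform with ⟨h0, rfl⟩ | rfl <;> simp
      have hne : ¬(v j0 0 = 0 ∧ v j0 2 = 0 ∧ v j0 3 = 0) := by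
        rintro ⟨e0, e2, e3⟩
        apply hj0
        funext i
        fin_cases i
        · exact e0
        · exact hv j0
        · exact e2
        · exact e3
      choose t ht using fun l => prop_lemma _ _ _ _ _ _ (hself j0) (hself l) (hiso j0 l) hne
      refine ⟨w, fun l => t l * h, fun l => ?_, hform⟩
      obtain ⟨ht0, ht2, ht3⟩ := ht l
      funext i
      fin_cases i
      · simp only [Pi.smul_apply, smul_eq_mul]
        rw [show (⟨0, by norm_num⟩ : Fin 4) = (0 : Fin 4) from rfl, ht0, hw0]; ring
      · simp only [Pi.smul_apply, smul_eq_mul]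
        rw [show (⟨1, by norm_num⟩ : Fin 4) = (1 : Fin 4) from rfl, hv l, hw1]; ring
      · simp only [Pi.smul_apply, smul_eq_mul]
        rw [show (⟨2, by norm_num⟩ : Fin 4) = (2 : Fin 4) from rfl, ht2, hw2]; ring
      · simp only [Pi.smul_apply, smul_eq_mul]
        rw [show (⟨3, by norm_num⟩ : Fin 4) = (3 : Fin 4) from rfl, ht3, hw3]; ring
  · rintro ⟨w, h, hvw, hform⟩ j l
    rw [bform_eq, hvw j, hvw l]
    simp only [Pi.smul_apply, smul_eq_mul]
    rcases hform with ⟨h0, rfl⟩ | rfl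
    · simp only [Matrix.cons_val_zero, Matrix.cons_val_one, Matrix.head_cons,
        Matrix.cons_val_two, Matrix.tail_cons, Matrix.cons_val_three]
      linear_combination h j * h l * (1 - h0^2)^2 * Complex.I_sq
    · simp only [Matrix.cons_val_zero, Matrix.cons_val_one, Matrix.head_cons,
        Matrix.cons_val_two, Matrix.tail_cons, Matrix.cons_val_three]
      linear_combination h j * h l * Complex.I_sq
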